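/- For n ≥ 1, the number of involutions of [n] whose plot avoids the pattern 321 (i.e., containing no decreasing subsequence of length 3) equals the central binomial coefficient C(n, ⌊n/2⌋). -/

import Mathlib

namespace Av321

inductive Step : Type
  | U | D | F
deriving DecidableEq, Repr

open Step

def S : ℕ → ℕ → Finset (List Step)
  | 0, 0 => {[]}
  | 0, _+1 => ∅
  | n+1, 0 => ((S n 0).image (F :: ·)) ∪ ((S n 1).image (U :: ·))
  | n+1, h+1 => ((S n h).image (D :: ·)) ∪ ((S n (h+2)).image (U :: ·))

lemma cons_inj (a : Step) : Function.Injective (a :: · : List Step → List Step) := by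
  intro x y h; simpa using h

lemma card_S (n h : ℕ) : (S n h).card = if h ≤ n then (n.choose ((n - h) / 2)) else 0 := by
  induction n generalizing h with
  | zero =>
    match h with
    | 0 => simp [S]
    | h+1 => simp [S]
  | succ n ih =>
    match h with
    | 0 =>
      have hdis : Disjoint ((S n 0).image (F :: ·)) ((S n 1).image (U :: ·)) := by
        simp only [Finset.disjoint_left, Finset.mem_image]
        rintro l ⟨x, hx, rfl⟩ ⟨y, hy, h⟩
        exact Step.noConfusion (List.head_eq_of_cons_eq h)
      rw [S, Finset.card_union_of_disjoint hdis,
        Finset.card_image_of_injective _ (cons_inj F),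
        Finset.card_image_of_injective _ (cons_inj U), ih, ih]
      simp only [Nat.zero_le, if_true, Nat.sub_zero]
      rcases Nat.eq_zero_or_pos n with rfl | hn
      · simp
      · rw [if_pos (show 1 ≤ n from hn)]
        obtain ⟨m, rfl | rfl⟩ := Nat.even_or_odd' n
        · -- n = 2m, m ≥ 1
          obtain ⟨j, rfl⟩ : ∃ j, m = j + 1 := ⟨m - 1, by omega⟩
          have h1 : (2 * (j+1) + 1) / 2 = j + 1 := by omega
          have h2 : (2 * (j+1)) / 2 = j + 1 := by omega
          have h3 : (2 * (j+1) - 1) / 2 = j := by omega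
          rw [h1, h2, h3]
          have hp := Nat.choose_succ_succ (2 * (j+1)) j
          simp only [Nat.succ_eq_add_one] at hp
          omega
        · -- n = 2m+1
          have h1 : (2 * m + 1 + 1) / 2 = m + 1 := by omega
          have h2 : (2 * m + 1) / 2 = m := by omega
          have h3 : (2 * m + 1 - 1) / 2 = m := by omega
          rw [h1, h2, h3]
          have p := Nat.choose_succ_succ (2 * m + 1) m
          simp only [Nat.succ_eq_add_one] at p
          have s : (2 * m + 1).choose (2 * m + 1 - m) = (2 * m + 1).choose m :=
            Nat.choose_symm (by omega)
          have hs : 2 * m + 1 - m = m + 1 := by omega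
          rw [hs] at s
          omega
    | h+1 =>
      have hdis : Disjoint ((S n h).image (D :: ·)) ((S n (h+2)).image (U :: ·)) := by
        simp only [Finset.disjoint_left, Finset.mem_image]
        rintro l ⟨x, hx, rfl⟩ ⟨y, hy, hh⟩
        exact Step.noConfusion (List.head_eq_of_cons_eq hh)
      rw [S, Finset.card_union_of_disjoint hdis,
        Finset.card_image_of_injective _ (cons_inj D),
        Finset.card_image_of_injective _ (cons_inj U), ih, ih]
      by_cases hh : h ≤ n
      · rw [if_pos hh, if_pos (by omega : h + 1 ≤ n + 1)]
        have he : n + 1 - (h+1) = n - h := by omega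
        rw [he]
        by_cases h2 : h + 2 ≤ n
        · rw [if_pos h2]
          obtain ⟨j, hj⟩ : ∃ j, (n - h) / 2 = j + 1 := ⟨(n-h)/2 - 1, by omega⟩
          have hc : n - (h + 2) = n - h - 2 := by omega
          have h3 : (n - h - 2) / 2 = j := by omega
          rw [hc, hj, h3]
          have hp := Nat.choose_succ_succ n j
          simp only [Nat.succ_eq_add_one] at hp
          omega
        · rw [if_neg h2]
          have h4 : (n - h) / 2 = 0 := by omega
          rw [h4]
          simp
      · rw [if_neg hh, if_neg (by omega), if_neg (by omega)]


def Ok : ℕ → List Step → Prop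
  | h, [] => h = 0
  | h, (U :: l) => Ok (h+1) l
  | 0, (D :: _) => False
  | (h+1), (D :: l) => Ok h l
  | 0, (F :: l) => Ok 0 l
  | (_+1), (F :: _) => False

lemma mem_S {n h : ℕ} {l : List Step} : l ∈ S n h ↔ l.length = n ∧ Ok h l := by
  induction n generalizing h l with
  | zero =>
    match h with
    | 0 =>
      simp only [S, Finset.mem_singleton]
      constructor
      · rintro rfl; exact ⟨rfl, rfl⟩
      · rintro ⟨hl, _⟩; exact List.length_eq_zero_iff.mp hl
    | h+1 =>
      simp only [S, Finset.notMem_empty, false_iff, not_and]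
      intro hl
      rw [List.length_eq_zero_iff.mp hl]
      simp [Ok]
  | succ n ih =>
    match l with
    | [] =>
      match h with
      | 0 => simp [S, Ok]
      | h+1 => simp [S, Ok]
    | a :: t =>
      match h, a with
      | 0, U => simp [S, ih, cons_inj, Ok, Finset.mem_union, Finset.mem_image]
      | 0, D => simp [S, ih, Ok, Finset.mem_union, Finset.mem_image]
      | 0, F => simp [S, ih, Ok, Finset.mem_union, Finset.mem_image]
      | h+1, U => simp [S, ih, Ok, Finset.mem_union, Finset.mem_image]
      | h+1, D => simp [S, ih, Ok, Finset.mem_union, Finset.mem_image]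
      | h+1, F => simp [S, ih, Ok, Finset.mem_union, Finset.mem_image]


lemma ok_iff (l : List Step) : ∀ h : ℕ, Ok h l ↔
    ((l.count D = h + l.count U) ∧
     (∀ p : ℕ, (l.take p).count D ≤ h + (l.take p).count U) ∧
     (∀ p : ℕ, l[p]? = some F → (l.take p).count D = h + (l.take p).count U)) := by
  induction l with
  | nil =>
    intro h
    simp only [Ok, List.count_nil, List.take_nil, List.getElem?_nil]
    constructor
    · rintro rfl; simp
    · rintro ⟨h1, _, _⟩; omega
  | cons a t ih =>
    intro h
    cases a
    case U =>
      simp only [Ok]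
      rw [ih (h+1)]
      constructor
      · rintro ⟨h1, h2, h3⟩
        refine ⟨?_, ?_, ?_⟩
        · simp [List.count_cons]; omega
        · intro p
          match p with
          | 0 => simp
          | p+1 =>
            have := h2 p
            simp [List.take_succ_cons, List.count_cons] at *
            omega
        · intro p hp
          match p with
          | 0 => simp at hp
          | p+1 =>
            simp only [List.getElem?_cons_succ] at hp
            have := h3 p hp
            simp [List.take_succ_cons, List.count_cons] at *
            omega
      · rintro ⟨h1, h2, h3⟩
        refine ⟨?_, ?_, ?_⟩
        · simp [List.count_cons] at h1; omega
        · intro p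
          have := h2 (p+1)
          simp [List.take_succ_cons, List.count_cons] at this
          omega
        · intro p hp
          have := h3 (p+1) (by simpa using hp)
          simp [List.take_succ_cons, List.count_cons] at this
          omega
    case D =>
      match h with
      | 0 =>
        simp only [Ok]
        simp only [false_iff, not_and]
        intro _ h2
        have := h2 1
        simp [List.count_cons] at this
      | h+1 =>
        simp only [Ok]
        rw [ih h]
        constructor
        · rintro ⟨h1, h2, h3⟩
          refine ⟨?_, ?_, ?_⟩
          · simp [List.count_cons]; omega
          · intro p
            match p with
            | 0 => simp
            | p+1 =>
              have := h2 p
              simp [List.take_succ_cons, List.count_cons] at *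
              omega
          · intro p hp
            match p with
            | 0 => simp at hp
            | p+1 =>
              simp only [List.getElem?_cons_succ] at hp
              have := h3 p hp
              simp [List.take_succ_cons, List.count_cons] at *
              omega
        · rintro ⟨h1, h2, h3⟩
          refine ⟨?_, ?_, ?_⟩
          · simp [List.count_cons] at h1; omega
          · intro p
            have := h2 (p+1)
            simp [List.take_succ_cons, List.count_cons] at this
            omega
          · intro p hp
            have := h3 (p+1) (by simpa using hp)
            simp [List.take_succ_cons, List.count_cons] at this
            omega
    case F =>
      match h with
      | 0 =>
        simp only [Ok]
        rw [ih 0]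
        constructor
        · rintro ⟨h1, h2, h3⟩
          refine ⟨?_, ?_, ?_⟩
          · simp [List.count_cons]; omega
          · intro p
            match p with
            | 0 => simp
            | p+1 =>
              have := h2 p
              simp [List.take_succ_cons, List.count_cons] at *
              omega
          · intro p hp
            match p with
            | 0 => simp
            | p+1 =>
              simp only [List.getElem?_cons_succ] at hp
              have := h3 p hp
              simp [List.take_succ_cons, List.count_cons] at *
              omega
        · rintro ⟨h1, h2, h3⟩
          refine ⟨?_, ?_, ?_⟩
          · simp [List.count_cons] at h1; omega
          · intro p
            have := h2 (p+1)
            simp [List.take_succ_cons, List.count_cons] at this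
            omega
          · intro p hp
            have := h3 (p+1) (by simpa using hp)
            simp [List.take_succ_cons, List.count_cons] at this
            omega
      | h+1 =>
        simp only [Ok]
        simp only [false_iff, not_and]
        intro _ h2 h3
        have := h3 0 (by simp)
        simp at this


def cnt {n : ℕ} (w : Fin n → Step) (p : ℕ) (a : Step) : ℕ :=
  (Finset.univ.filter fun i : Fin n => (i : ℕ) < p ∧ w i = a).card

lemma count_take_ofFn {n : ℕ} (w : Fin n → Step) (p : ℕ) (a : Step) :
    ((List.ofFn w).take p).count a = cnt w p a := by
  induction n generalizing p with
  | zero =>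
    simp only [List.ofFn_zero, List.take_nil, List.count_nil, cnt]
    rw [eq_comm, Finset.card_eq_zero]
    apply Finset.eq_empty_of_forall_notMem
    intro i
    exact absurd i.2 (by omega)
  | succ n ih =>
    match p with
    | 0 =>
      simp only [List.take_zero, List.count_nil, cnt]
      rw [eq_comm, Finset.card_eq_zero]
      apply Finset.eq_empty_of_forall_notMem
      intro i
      simp
    | p+1 =>
      have key : cnt w (p+1) a
          = (if w 0 = a then 1 else 0) + cnt (fun i : Fin n => w i.succ) p a := by
        simp only [cnt, Finset.card_filter, Fin.sum_univ_succ, Fin.val_zero, Fin.val_succ]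
        congr 1
        · simp
        · apply Finset.sum_congr rfl
          intro i _
          congr 1
          simp only [eq_iff_iff]
          constructor
          · rintro ⟨h1, h2⟩; exact ⟨by omega, h2⟩
          · rintro ⟨h1, h2⟩; exact ⟨by omega, h2⟩
      rw [List.ofFn_succ, List.take_succ_cons, List.count_cons, ih, key]
      have : (if (w 0 == a) = true then 1 else 0) = if w 0 = a then 1 else 0 := by
        simp [beq_iff_eq]
      rw [this]
      omega

lemma count_ofFn {n : ℕ} (w : Fin n → Step) (a : Step) :
    (List.ofFn w).count a = cnt w n a := by
  conv_lhs => rw [← List.take_length (l := List.ofFn w), List.length_ofFn]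
  exact count_take_ofFn w n a

lemma ok_ofFn_iff {n : ℕ} (w : Fin n → Step) : Ok 0 (List.ofFn w) ↔
    ((cnt w n D = cnt w n U) ∧
     (∀ p : ℕ, cnt w p D ≤ cnt w p U) ∧
     (∀ i : Fin n, w i = F → cnt w i D = cnt w i U)) := by
  rw [ok_iff]
  simp only [count_take_ofFn, count_ofFn, Nat.zero_add]
  constructor
  · rintro ⟨h1, h2, h3⟩
    refine ⟨h1, h2, ?_⟩
    intro i hi
    apply h3 i
    rw [List.getElem?_ofFn]
    simp [List.ofFnNthVal, i.2, hi]
  · rintro ⟨h1, h2, h3⟩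
    refine ⟨h1, h2, ?_⟩
    intro p hp
    rw [List.getElem?_ofFn] at hp
    split at hp
    · next hpn =>
      have : w ⟨p, hpn⟩ = F := by simpa using hp
      simpa using h3 ⟨p, hpn⟩ this
    · simp at hp


def aset {n : ℕ} (w : Fin n → Step) (a : Step) : Finset (Fin n) :=
  Finset.univ.filter fun i => w i = a

lemma mem_aset {n : ℕ} {w : Fin n → Step} {a : Step} {i : Fin n} :
    i ∈ aset w a ↔ w i = a := by simp [aset]

lemma cnt_eq {n : ℕ} (w : Fin n → Step) (p : ℕ) (a : Step) :
    cnt w p a = ((aset w a).filter fun i : Fin n => (i : ℕ) < p).card := by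
  unfold cnt aset
  rw [Finset.filter_filter]
  congr 1
  ext i
  simp [and_comm]

lemma cnt_n {n : ℕ} (w : Fin n → Step) (a : Step) :
    cnt w n a = (aset w a).card := by
  rw [cnt_eq]
  congr 1
  apply Finset.filter_true_of_mem
  intro i _
  exact i.2

lemma emb_symm {n m : ℕ} (s : Finset (Fin n)) (hs : s.card = m) {x : Fin n} (hx : x ∈ s) :
    s.orderEmbOfFin hs ((s.orderIsoOfFin hs).symm ⟨x, hx⟩) = x := by
  rw [← Finset.coe_orderIsoOfFin_apply, OrderIso.apply_symm_apply]

lemma orderEmb_surj {n m : ℕ} (s : Finset (Fin n)) (hs : s.card = m) {x : Fin n}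
    (hx : x ∈ s) : ∃ k, s.orderEmbOfFin hs k = x :=
  ⟨(s.orderIsoOfFin hs).symm ⟨x, hx⟩, emb_symm s hs hx⟩

lemma H_ge {n m : ℕ} (s : Finset (Fin n)) (hs : s.card = m) (k : Fin m) {p : ℕ}
    (hk : ((s.orderEmbOfFin hs k : Fin n) : ℕ) < p) :
    (k : ℕ) + 1 ≤ (s.filter fun i : Fin n => (i : ℕ) < p).card := by
  have h1 : (Finset.univ : Finset (Fin ((k : ℕ)+1))).card ≤
      (s.filter fun i : Fin n => (i : ℕ) < p).card := by
    apply Finset.card_le_card_of_injOn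
      (fun j : Fin ((k : ℕ)+1) => s.orderEmbOfFin hs ⟨j.1, Nat.lt_of_lt_of_le j.2 k.2⟩)
    · intro j _
      rw [Finset.mem_coe, Finset.mem_filter]; beta_reduce
      refine ⟨Finset.orderEmbOfFin_mem _ _ _, ?_⟩
      have hle : s.orderEmbOfFin hs ⟨j.1, Nat.lt_of_lt_of_le j.2 k.2⟩ ≤ s.orderEmbOfFin hs k := by
        apply (s.orderEmbOfFin hs).monotone
        rw [Fin.le_def]
        exact Nat.lt_succ_iff.mp j.2
      rw [Fin.le_def] at hle
      omega
    · intro x _ y _ hxy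
      have h2 := (s.orderEmbOfFin hs).injective hxy
      have h3 : ((x : ℕ) : ℕ) = (y : ℕ) := by
        have := congrArg Fin.val h2
        simpa using this
      exact Fin.ext h3
  simpa using h1

lemma H_le {n m : ℕ} (s : Finset (Fin n)) (hs : s.card = m) (k : Fin m) {p : ℕ}
    (hk : p ≤ ((s.orderEmbOfFin hs k : Fin n) : ℕ)) :
    (s.filter fun i : Fin n => (i : ℕ) < p).card ≤ (k : ℕ) := by
  classical
  have h1 : (s.filter fun i : Fin n => (i : ℕ) < p).card ≤ (Finset.range (k : ℕ)).card := by
    apply Finset.card_le_card_of_injOn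
      (fun x => if hx : x ∈ s then (((s.orderIsoOfFin hs).symm ⟨x, hx⟩ : Fin m) : ℕ) else 0)
    · intro x hx
      rw [Finset.mem_coe, Finset.mem_filter] at hx
      obtain ⟨hxs, hxp⟩ := hx
      beta_reduce; rw [dif_pos hxs, Finset.mem_coe, Finset.mem_range]
      set j := (s.orderIsoOfFin hs).symm ⟨x, hxs⟩ with hj
      have hembj : s.orderEmbOfFin hs j = x := emb_symm s hs hxs
      have hlt : s.orderEmbOfFin hs j < s.orderEmbOfFin hs k := by
        rw [hembj, Fin.lt_def]
        omega
      have := (s.orderEmbOfFin hs).strictMono.lt_iff_lt.mp hlt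
      exact this
    · intro x hx y hy hxy
      rw [Finset.coe_filter] at hx hy
      obtain ⟨hxs, _⟩ := hx
      obtain ⟨hys, _⟩ := hy
      simp only [dif_pos hxs, dif_pos hys] at hxy
      have : (s.orderIsoOfFin hs).symm ⟨x, hxs⟩ = (s.orderIsoOfFin hs).symm ⟨y, hys⟩ :=
        Fin.ext hxy
      have := congrArg (fun z => ((s.orderIsoOfFin hs) z : Fin n)) this
      simpa using this
  simpa using h1


def wd {n : ℕ} (τ : Equiv.Perm (Fin n)) : Fin n → Step := fun i =>
  if i < τ i then U else if τ i < i then D else F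

lemma wd_U {n : ℕ} {τ : Equiv.Perm (Fin n)} {i : Fin n} : wd τ i = U ↔ i < τ i := by
  unfold wd
  split_ifs with h1 h2 <;> simp_all

lemma wd_D {n : ℕ} {τ : Equiv.Perm (Fin n)} {i : Fin n} : wd τ i = D ↔ τ i < i := by
  unfold wd
  split_ifs with h1 h2 <;> simp_all
  omega

lemma wd_F {n : ℕ} {τ : Equiv.Perm (Fin n)} {i : Fin n} : wd τ i = F ↔ τ i = i := by
  unfold wd
  split_ifs with h1 h2 <;> simp_all <;> omega

section TauSide

variable {n : ℕ} {τ : Equiv.Perm (Fin n)}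
  (hinv : Function.Involutive ⇑τ)
  (hav : ∀ i j k : Fin n, i < j → j < k → τ k < τ j → ¬ τ j < τ i)

include hinv hav in
lemma mono_exc : ∀ a b : Fin n, a < τ a → b < τ b → a < b → τ a < τ b := by
  intro a b ha hb hab
  have h1 : τ (τ b) < τ b := by rw [hinv b]; exact hb
  have h2 := hav a b (τ b) hab hb h1
  rcases lt_trichotomy (τ a) (τ b) with h | h | h
  · exact h
  · exact absurd (τ.injective h) (by omega)
  · exact absurd h h2

include hinv in
lemma card_DU : (aset (wd τ) D).card = (aset (wd τ) U).card := by
  apply Finset.card_bij' (fun i _ => τ i) (fun i _ => τ i)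
  · intro i hi
    rw [mem_aset, wd_D] at hi
    rw [mem_aset, wd_U, hinv i]
    exact hi
  · intro i hi
    rw [mem_aset, wd_U] at hi
    rw [mem_aset, wd_D, hinv i]
    exact hi
  · intro i _; exact hinv i
  · intro i _; exact hinv i

include hinv hav in
lemma wd_ok : Ok 0 (List.ofFn (wd τ)) := by
  rw [ok_ofFn_iff]
  have hpre : ∀ p : ℕ, cnt (wd τ) p D ≤ cnt (wd τ) p U := by
    intro p
    unfold cnt
    apply Finset.card_le_card_of_injOn (fun i => τ i)
    · intro i hi
      rw [Finset.mem_coe, Finset.mem_filter] at hi ⊢; beta_reduce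
      obtain ⟨-, hip, hiD⟩ := hi
      rw [wd_D] at hiD
      refine ⟨Finset.mem_univ _, ?_, ?_⟩
      · have : (τ i : ℕ) < (i : ℕ) := hiD
        omega
      · rw [wd_U, hinv i]; exact hiD
    · intro x _ y _ hxy
      exact τ.injective hxy
  refine ⟨?_, hpre, ?_⟩
  · rw [cnt_n, cnt_n, card_DU hinv]
  · intro i hiF
    rw [wd_F] at hiF
    refine le_antisymm (by
      have := hpre (i : ℕ)
      unfold cnt at this ⊢
      exact this) ?_
    unfold cnt
    apply Finset.card_le_card_of_injOn (fun e => τ e)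
    · intro e he
      rw [Finset.mem_coe, Finset.mem_filter] at he ⊢
      obtain ⟨-, hep, heU⟩ := he
      rw [wd_U] at heU
      refine ⟨Finset.mem_univ _, ?_, ?_⟩
      · -- show (τ e : ℕ) < i
        by_contra hcon
        push_neg at hcon
        have hne : τ e ≠ i := by
          intro hcontra
          have : e = τ i := by rw [← hcontra, hinv e]
          rw [hiF] at this
          omega
        have hlt : i < τ e := by
          rw [Fin.lt_def]
          rcases Nat.lt_or_ge (i : ℕ) ((τ e : ℕ)) with h | h
          · exact h
          · exact absurd (Fin.ext (by omega)) hne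
        have helti : e < i := by rw [Fin.lt_def]; omega
        have h1 : τ (τ e) < τ i := by rw [hinv e, hiF]; exact helti
        have h2 := hav e i (τ e) helti hlt h1
        rw [hiF] at h2
        exact h2 hlt
      · rw [wd_D, hinv e]; exact heU
    · intro x _ y _ hxy
      exact τ.injective hxy

include hinv hav in
lemma exc_apply {m : ℕ} (hE : (aset (wd τ) U).card = m) (hD : (aset (wd τ) D).card = m) :
    ∀ k : Fin m, τ ((aset (wd τ) U).orderEmbOfFin hE k) = (aset (wd τ) D).orderEmbOfFin hD k := by
  have hmem : ∀ k : Fin m, τ ((aset (wd τ) U).orderEmbOfFin hE k) ∈ aset (wd τ) D := by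
    intro k
    have h1 : (aset (wd τ) U).orderEmbOfFin hE k ∈ aset (wd τ) U :=
      Finset.orderEmbOfFin_mem _ _ _
    rw [mem_aset, wd_U] at h1
    rw [mem_aset, wd_D, hinv]
    exact h1
  have hmono : StrictMono (fun k : Fin m => τ ((aset (wd τ) U).orderEmbOfFin hE k)) := by
    intro k1 k2 hk
    have hm := (aset (wd τ) U).orderEmbOfFin hE |>.strictMono hk
    have hx1 : (aset (wd τ) U).orderEmbOfFin hE k1 ∈ aset (wd τ) U :=
      Finset.orderEmbOfFin_mem _ _ _
    have hx2 : (aset (wd τ) U).orderEmbOfFin hE k2 ∈ aset (wd τ) U :=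
      Finset.orderEmbOfFin_mem _ _ _
    rw [mem_aset, wd_U] at hx1 hx2
    exact mono_exc hinv hav _ _ hx1 hx2 hm
  have := Finset.orderEmbOfFin_unique hD hmem hmono
  intro k
  exact congrFun this k

end TauSide

lemma orderEmbOfFin_congr {n m : ℕ} {s s' : Finset (Fin n)} (hss : s = s')
    (h : s.card = m) (h' : s'.card = m) : s.orderEmbOfFin h = s'.orderEmbOfFin h' := by
  subst hss; rfl

lemma tau_eq_of_wd_eq {n : ℕ} {τ τ' : Equiv.Perm (Fin n)}
    (hinv : Function.Involutive ⇑τ)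
    (hav : ∀ i j k : Fin n, i < j → j < k → τ k < τ j → ¬ τ j < τ i)
    (hinv' : Function.Involutive ⇑τ')
    (hav' : ∀ i j k : Fin n, i < j → j < k → τ' k < τ' j → ¬ τ' j < τ' i)
    (hw : wd τ = wd τ') : τ = τ' := by
  set E := aset (wd τ) U with hEdef
  set Ds := aset (wd τ) D with hDdef
  have hE : E.card = E.card := rfl
  have hD : Ds.card = E.card := card_DU hinv
  have key := exc_apply hinv hav hE hD
  have hE' : aset (wd τ') U = E := by rw [hEdef, hw]
  have hD' : aset (wd τ') D = Ds := by rw [hDdef, hw]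
  have key' : ∀ k : Fin E.card, τ' (E.orderEmbOfFin hE k) = Ds.orderEmbOfFin hD k := by
    have h1 : (aset (wd τ') U).card = E.card := by rw [hE']
    have h2 : (aset (wd τ') D).card = E.card := by rw [hD']; exact hD
    have := exc_apply hinv' hav' h1 h2
    intro k
    have hx := this k
    have e1 : (aset (wd τ') U).orderEmbOfFin h1 = E.orderEmbOfFin hE :=
      orderEmbOfFin_congr hE' h1 hE
    have e2 : (aset (wd τ') D).orderEmbOfFin h2 = Ds.orderEmbOfFin hD :=
      orderEmbOfFin_congr hD' h2 hD
    rw [e1, e2] at hx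
    exact hx
  apply Equiv.ext
  intro i
  rcases hstep : wd τ i with _ | _ | _
  · -- U
    have hiE : i ∈ E := by rw [hEdef, mem_aset]; exact hstep
    obtain ⟨k, hk⟩ := orderEmb_surj E hE hiE
    rw [← hk, key k, key' k]
  · -- D
    have hiD : i ∈ Ds := by rw [hDdef, mem_aset]; exact hstep
    have hτi : τ i ∈ E := by
      rw [hEdef, mem_aset, wd_U, hinv i]
      rw [hDdef, mem_aset, wd_D] at hiD
      exact hiD
    obtain ⟨k, hk⟩ := orderEmb_surj E hE hτi
    have h1 : τ (τ i) = Ds.orderEmbOfFin hD k := by rw [← key k, hk]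
    rw [hinv i] at h1
    have hτ'i : τ' i ∈ E := by
      have : wd τ' i = D := by rw [← hw]; exact hstep
      rw [← hE', mem_aset, wd_U, hinv' i]
      rw [wd_D] at this
      exact this
    obtain ⟨k', hk'⟩ := orderEmb_surj E hE hτ'i
    have h2 : τ' (τ' i) = Ds.orderEmbOfFin hD k' := by rw [← key' k', hk']
    rw [hinv' i] at h2
    have : k = k' := (Ds.orderEmbOfFin hD).injective (by rw [← h1, ← h2])
    rw [← hk, ← hk', this]
  · -- F
    have h1 : τ i = i := wd_F.mp hstep
    have h2 : τ' i = i := wd_F.mp (by rw [← hw]; exact hstep)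
    rw [h1, h2]

lemma exists_tau {n : ℕ} (w : Fin n → Step) (hok : Ok 0 (List.ofFn w)) :
    ∃ τ : Equiv.Perm (Fin n), Function.Involutive ⇑τ ∧
      (∀ i j k : Fin n, i < j → j < k → τ k < τ j → ¬ τ j < τ i) ∧ wd τ = w := by
  classical
  obtain ⟨hT, hP, hG⟩ := (ok_ofFn_iff w).mp hok
  set E := aset w U with hEdef
  set Ds := aset w D with hDdef
  have hE : E.card = E.card := rfl
  have hD : Ds.card = E.card := by
    rw [← cnt_n, ← cnt_n, hT]
  set m := E.card
  set eemb := E.orderEmbOfFin hE with heemb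
  set demb := Ds.orderEmbOfFin hD with hdemb
  -- R1 : eemb k < demb k
  have R1 : ∀ k : Fin m, eemb k < demb k := by
    intro k
    have hd : ((demb k : Fin n) : ℕ) < ((demb k : Fin n) : ℕ) + 1 := Nat.lt_succ_self _
    have h1 : (k : ℕ) + 1 ≤ cnt w ((demb k : Fin n) + 1 : ℕ) D := by
      rw [cnt_eq]
      exact H_ge Ds hD k hd
    have h2 : (k : ℕ) + 1 ≤ cnt w ((demb k : Fin n) + 1 : ℕ) U := le_trans h1 (hP _)
    have h3 : ¬ ((demb k : Fin n) : ℕ) + 1 ≤ ((eemb k : Fin n) : ℕ) := by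
      intro hcon
      have := H_le E hE k hcon
      rw [← cnt_eq] at this
      omega
    have hne : (eemb k : Fin n) ≠ (demb k : Fin n) := by
      intro hcon
      have hU : (eemb k : Fin n) ∈ E := Finset.orderEmbOfFin_mem _ _ _
      have hDm : (demb k : Fin n) ∈ Ds := Finset.orderEmbOfFin_mem _ _ _
      rw [hEdef, mem_aset] at hU
      rw [hDdef, mem_aset] at hDm
      rw [hcon, hDm] at hU
      exact Step.noConfusion hU
    rw [Fin.lt_def]
    have : ((eemb k : Fin n) : ℕ) ≠ ((demb k : Fin n) : ℕ) := fun hc => hne (Fin.ext hc)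
    omega
  let t : Fin n → Fin n := fun i =>
    if hi : i ∈ E then demb ((E.orderIsoOfFin hE).symm ⟨i, hi⟩)
    else if hi' : i ∈ Ds then eemb ((Ds.orderIsoOfFin hD).symm ⟨i, hi'⟩)
    else i
  have disjED : ∀ i : Fin n, i ∈ E → i ∈ Ds → False := by
    intro i h1 h2
    rw [hEdef, mem_aset] at h1
    rw [hDdef, mem_aset] at h2
    rw [h1] at h2
    exact Step.noConfusion h2
  have tE : ∀ (i : Fin n) (hi : i ∈ E), t i = demb ((E.orderIsoOfFin hE).symm ⟨i, hi⟩) := by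
    intro i hi
    simp only [t, dif_pos hi]
  have tD : ∀ (i : Fin n) (hi : i ∈ Ds), t i = eemb ((Ds.orderIsoOfFin hD).symm ⟨i, hi⟩) := by
    intro i hi
    have hiE : i ∉ E := fun h => disjED i h hi
    simp only [t, dif_neg hiE, dif_pos hi]
  have tF : ∀ i : Fin n, i ∉ E → i ∉ Ds → t i = i := by
    intro i h1 h2
    simp only [t, dif_neg h1, dif_neg h2]
  have tEU : ∀ (i : Fin n), i ∈ E → ∃ k : Fin m, eemb k = i ∧ t i = demb k := by
    intro i hi
    refine ⟨(E.orderIsoOfFin hE).symm ⟨i, hi⟩, ?_, tE i hi⟩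
    exact emb_symm E hE hi
  have tDU : ∀ (i : Fin n), i ∈ Ds → ∃ k : Fin m, demb k = i ∧ t i = eemb k := by
    intro i hi
    refine ⟨(Ds.orderIsoOfFin hD).symm ⟨i, hi⟩, ?_, tD i hi⟩
    exact emb_symm Ds hD hi
  have hinv : Function.Involutive t := by
    intro i
    by_cases hi : i ∈ E
    · obtain ⟨k, hk, ht⟩ := tEU i hi
      rw [ht]
      have hdm : (demb k : Fin n) ∈ Ds := Finset.orderEmbOfFin_mem _ _ _
      obtain ⟨k', hk', ht'⟩ := tDU _ hdm
      rw [ht']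
      have : k' = k := (Ds.orderEmbOfFin hD).injective hk'
      rw [this, hk]
    · by_cases hi' : i ∈ Ds
      · obtain ⟨k, hk, ht⟩ := tDU i hi'
        rw [ht]
        have hem : (eemb k : Fin n) ∈ E := Finset.orderEmbOfFin_mem _ _ _
        obtain ⟨k', hk', ht'⟩ := tEU _ hem
        rw [ht']
        have : k' = k := (E.orderEmbOfFin hE).injective hk'
        rw [this, hk]
      · rw [tF i hi hi', tF i hi hi']
  -- descent classification
  have descent : ∀ a b : Fin n, a < b → t b < t a → a ∈ E ∧ b ∈ Ds := by
    intro a b hab hdes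
    by_cases haE : a ∈ E
    · by_cases hbE : b ∈ E
      · obtain ⟨k1, hk1, ht1⟩ := tEU a haE
        obtain ⟨k2, hk2, ht2⟩ := tEU b hbE
        rw [ht1, ht2] at hdes
        have h1 : k1 < k2 := (E.orderEmbOfFin hE).strictMono.lt_iff_lt.mp (by rw [hk1, hk2]; exact hab)
        have h2 : k2 < k1 := (Ds.orderEmbOfFin hD).strictMono.lt_iff_lt.mp hdes
        exact absurd h1 (by omega)
      · by_cases hbD : b ∈ Ds
        · exact ⟨haE, hbD⟩
        · -- b is F
          exfalso
          obtain ⟨k, hk, ht⟩ := tEU a haE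
          rw [ht, tF b hbE hbD] at hdes
          -- hdes : b < demb k ; hab : eemb k = a < b
          have hbF : w b = F := by
            have h1 : w b ≠ U := fun h => hbE (by rw [hEdef, mem_aset]; exact h)
            have h2 : w b ≠ D := fun h => hbD (by rw [hDdef, mem_aset]; exact h)
            cases hwb : w b
            · exact absurd hwb h1
            · exact absurd hwb h2
            · rfl
          have hg := hG b hbF
          have h1 : (k : ℕ) + 1 ≤ cnt w (b : ℕ) U := by
            rw [cnt_eq]
            apply H_ge E hE k
            rw [hk]
            exact hab
          have h2 : cnt w (b : ℕ) D ≤ (k : ℕ) := by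
            rw [cnt_eq]
            apply H_le Ds hD k
            exact le_of_lt hdes
          omega
    · by_cases haD : a ∈ Ds
      · exfalso
        obtain ⟨k, hk, ht⟩ := tDU a haD
        -- t a = eemb k, a = demb k, and eemb k < demb k = a < b
        have hlt : (eemb k : Fin n) < a := by rw [← hk]; exact R1 k
        by_cases hbE : b ∈ E
        · obtain ⟨k2, hk2, ht2⟩ := tEU b hbE
          rw [ht, ht2] at hdes
          -- demb k2 < eemb k < a < b = eemb k2 < demb k2
          have h1 : (eemb k2 : Fin n) < demb k2 := R1 k2
          have h2 : a < (eemb k2 : Fin n) := by rw [hk2]; exact hab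
          rw [Fin.lt_def] at hdes hlt h1 h2
          omega
        · by_cases hbD : b ∈ Ds
          · obtain ⟨k2, hk2, ht2⟩ := tDU b hbD
            rw [ht, ht2] at hdes
            have h1 : k < k2 := (Ds.orderEmbOfFin hD).strictMono.lt_iff_lt.mp (by rw [hk, hk2]; exact hab)
            have h2 : k2 < k := (E.orderEmbOfFin hE).strictMono.lt_iff_lt.mp hdes
            omega
          · rw [ht, tF b hbE hbD] at hdes
            -- b < eemb k < a < b
            rw [Fin.lt_def] at hdes hlt hab
            omega
      · -- a is F : t a = a
        exfalso
        rw [tF a haE haD] at hdes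
        by_cases hbE : b ∈ E
        · obtain ⟨k, hk, ht⟩ := tEU b hbE
          rw [ht] at hdes
          -- demb k < a < b = eemb k < demb k
          have h1 : (eemb k : Fin n) < demb k := R1 k
          have h2 : a < (eemb k : Fin n) := by rw [hk]; exact hab
          rw [Fin.lt_def] at hdes h1 h2
          omega
        · by_cases hbD : b ∈ Ds
          · obtain ⟨k, hk, ht⟩ := tDU b hbD
            rw [ht] at hdes
            -- eemb k < a, a < b = demb k
            have haF : w a = F := by
              rcases hwa : w a with _ | _ | _
              · exact absurd (mem_aset.mpr hwa) haE
              · exact absurd (mem_aset.mpr hwa) haD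
              · rfl
            have hg := hG a haF
            have h1 : (k : ℕ) + 1 ≤ cnt w (a : ℕ) U := by
              rw [cnt_eq]
              exact H_ge E hE k hdes
            have h2 : cnt w (a : ℕ) D ≤ (k : ℕ) := by
              rw [cnt_eq]
              apply H_le Ds hD k
              rw [hk]
              exact le_of_lt hab
            omega
          · rw [tF b hbE hbD] at hdes
            rw [Fin.lt_def] at hdes hab
            omega
  refine ⟨hinv.toPerm t, ?_, ?_, ?_⟩
  · intro i
    simp only [Function.Involutive.coe_toPerm]
    exact hinv i
  · intro i j k' hij hjk h1 h2
    simp only [Function.Involutive.coe_toPerm] at h1 h2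
    have d1 := descent i j hij h2
    have d2 := descent j k' hjk h1
    exact disjED j d2.1 d1.2
  · funext i
    by_cases hi : i ∈ E
    · obtain ⟨k, hk, ht⟩ := tEU i hi
      have hx : wd (hinv.toPerm t) i = U := by
        rw [wd_U]
        simp only [Function.Involutive.coe_toPerm]
        rw [ht, ← hk]
        exact R1 k
      rw [hx]
      exact (mem_aset.mp hi).symm
    · by_cases hi' : i ∈ Ds
      · obtain ⟨k, hk, ht⟩ := tDU i hi'
        have hx : wd (hinv.toPerm t) i = D := by
          rw [wd_D]
          simp only [Function.Involutive.coe_toPerm]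
          rw [ht, ← hk]
          exact R1 k
        rw [hx]
        exact (mem_aset.mp hi').symm
      · have hx : wd (hinv.toPerm t) i = F := by
          rw [wd_F]
          simp only [Function.Involutive.coe_toPerm]
          exact tF i hi hi'
        rw [hx]
        rcases hwa : w i with _ | _ | _
        · exact absurd (mem_aset.mpr hwa) hi
        · exact absurd (mem_aset.mpr hwa) hi'
        · rfl

lemma ofFn_eq_of_length {n : ℕ} {l : List Step} (h : l.length = n) :
    List.ofFn (fun i : Fin n => l[(i : ℕ)]'(by omega)) = l := by
  subst h
  exact List.ofFn_getElem

end Av321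

open Av321 Av321.Step in
set_option linter.unusedVariables false in
/-- For `n ≥ 1`, the number of involutions of `[n]` avoiding the classical
pattern 321 (no decreasing subsequence of length 3) is the central binomial
coefficient `C(n, ⌊n/2⌋)`. -/
theorem involutions_avoiding_321_card (n : ℕ) (hn : 1 ≤ n) :
    Nat.card {τ : Equiv.Perm (Fin n) // Function.Involutive ⇑τ ∧
      ∀ i j k : Fin n, i < j → j < k → τ k < τ j → ¬ τ j < τ i} =
    Nat.choose n (n / 2) := by
  classical
  have hbij : Function.Bijective
      (fun τs : {τ : Equiv.Perm (Fin n) // Function.Involutive ⇑τ ∧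
          ∀ i j k : Fin n, i < j → j < k → τ k < τ j → ¬ τ j < τ i} =>
        (⟨List.ofFn (wd τs.1), mem_S.mpr ⟨List.length_ofFn, wd_ok τs.2.1 τs.2.2⟩⟩ :
          {l : List Step // l ∈ S n 0})) := by
    constructor
    · rintro ⟨τ, hτ1, hτ2⟩ ⟨τ', hτ'1, hτ'2⟩ hh
      simp only [Subtype.mk.injEq] at hh
      have := List.ofFn_injective hh
      exact Subtype.ext (tau_eq_of_wd_eq hτ1 hτ2 hτ'1 hτ'2 this)
    · rintro ⟨l, hl⟩
      obtain ⟨hlen, hok⟩ := mem_S.mp hl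
      set w : Fin n → Step := fun i : Fin n => l[(i : ℕ)]'(by omega) with hw
      have hofn : List.ofFn w = l := ofFn_eq_of_length hlen
      obtain ⟨τ, h1, h2, h3⟩ := exists_tau w (by rw [hofn]; exact hok)
      refine ⟨⟨τ, h1, h2⟩, ?_⟩
      simp only [Subtype.mk.injEq]
      rw [h3, hofn]
  have hcard := Nat.card_congr (Equiv.ofBijective _ hbij)
  rw [hcard, Nat.card_eq_finsetCard, card_S]
  simp
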